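/- Let U be a Hopf algebra over ℂ and T : U → End(V) a finite-dimensional irreducible representation (V ≠ 0 and the only T-invariant subspaces of V are 0 and V). Define the linear map c : V* ⊗ V → U* by c(ξ ⊗ v)(a) = ξ(T(a)v). Then: (i) c intertwines the representation T* ⊗ T on V* ⊗ V with the action ad° of U on U*, i.e. c((T* ⊗ T)(a)(w)) = ad°(a)(c(w)) for all a ∈ U and w ∈ V* ⊗ V; (ii) c is injective with image equal to the space of matrix elements M(T); in particular dim_ℂ M(T) = (dim_ℂ V)². -/

import Mathlib

open TensorProduct

section Defs

variable {U V : Type*} [Ring U] [HopfAlgebra ℂ U] [AddCommGroup V] [Module ℂ V]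

/-- The right adjoint action `ad(a)b = Σ S(a₁) b a₂` of a Hopf algebra on itself. -/
noncomputable def adAct (a b : U) : U :=
  (LinearMap.mul' ℂ U ∘ₗ
    TensorProduct.map ((LinearMap.mulRight ℂ b) ∘ₗ HopfAlgebra.antipode (R := ℂ))
      LinearMap.id)
    (Coalgebra.comul a)

/-- The linear map `c : V* ⊗ V → U*`, `c(ξ ⊗ v)(a) = ξ(T(a)v)`. -/
noncomputable def cMap (T : U →ₐ[ℂ] Module.End ℂ V) :
    (Module.Dual ℂ V) ⊗[ℂ] V →ₗ[ℂ] (U →ₗ[ℂ] ℂ) :=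
  TensorProduct.lift
    ((LinearMap.lcomp ℂ (U →ₗ[ℂ] ℂ)
        ((T.toLinearMap : U →ₗ[ℂ] (V →ₗ[ℂ] V)).flip)) ∘ₗ
      (LinearMap.llcomp ℂ U V ℂ))

/-- The space of matrix elements `M(T)` of a representation `T : U → End(V)`:
the span of the functionals `c^ξ_v : a ↦ ξ(T(a)v)`. -/
noncomputable def matrixElems (T : U →ₐ[ℂ] Module.End ℂ V) :
    Submodule ℂ (U →ₗ[ℂ] ℂ) :=
  Submodule.span ℂ
    {c | ∃ (ξ : Module.Dual ℂ V) (v : V), c = cMap T (ξ ⊗ₜ[ℂ] v)}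

/-- The dual representation `T*`, `T*(a)ξ = ξ ∘ T(S(a))`, as a linear map
`U →ₗ End(V*)`. -/
noncomputable def dualRep (T : U →ₐ[ℂ] Module.End ℂ V) :
    U →ₗ[ℂ] (Module.Dual ℂ V →ₗ[ℂ] Module.Dual ℂ V) :=
  Module.Dual.transpose ∘ₗ (T.toLinearMap : U →ₗ[ℂ] (V →ₗ[ℂ] V)) ∘ₗ
    HopfAlgebra.antipode (R := ℂ)

/-- The tensor product of two representations:
`(T₁ ⊗ T₂)(a) = Σ T₁(a₁) ⊗ T₂(a₂)`. -/
noncomputable def tensorRep {V₁ V₂ : Type*}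
    [AddCommGroup V₁] [Module ℂ V₁] [AddCommGroup V₂] [Module ℂ V₂]
    (L₁ : U →ₗ[ℂ] (V₁ →ₗ[ℂ] V₁)) (L₂ : U →ₗ[ℂ] (V₂ →ₗ[ℂ] V₂)) :
    U →ₗ[ℂ] (V₁ ⊗[ℂ] V₂ →ₗ[ℂ] V₁ ⊗[ℂ] V₂) :=
  TensorProduct.homTensorHomMap (RingHom.id ℂ) V₁ V₂ V₁ V₂ ∘ₗ
    TensorProduct.map L₁ L₂ ∘ₗ Coalgebra.comul

end Defs

section Aux

variable {U V : Type*} [Ring U] [HopfAlgebra ℂ U] [AddCommGroup V] [Module ℂ V]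

lemma cMap_tmul (T : U →ₐ[ℂ] Module.End ℂ V) (ξ : Module.Dual ℂ V) (v : V) (a : U) :
    cMap T (ξ ⊗ₜ[ℂ] v) a = ξ (T a v) := rfl

lemma part_i (T : U →ₐ[ℂ] Module.End ℂ V) (a : U) (w : (Module.Dual ℂ V) ⊗[ℂ] V) (b : U) :
    cMap T ((tensorRep (dualRep T) (T.toLinearMap : U →ₗ[ℂ] (V →ₗ[ℂ] V)) a) w) b =
      cMap T w (adAct a b) := by
  induction w using TensorProduct.induction_on with
  | zero => simp
  | add x y hx hy => simp [map_add, LinearMap.add_apply, hx, hy]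
  | tmul ξ v =>
    show cMap T ((TensorProduct.homTensorHomMap (RingHom.id ℂ) _ _ _ _)
        ((TensorProduct.map (dualRep T) T.toLinearMap) (Coalgebra.comul a)) (ξ ⊗ₜ[ℂ] v)) b =
      cMap T (ξ ⊗ₜ[ℂ] v) ((LinearMap.mul' ℂ U)
        ((TensorProduct.map ((LinearMap.mulRight ℂ b) ∘ₗ HopfAlgebra.antipode (R := ℂ))
          LinearMap.id) (Coalgebra.comul a)))
    induction Coalgebra.comul (R := ℂ) a using TensorProduct.induction_on with
    | zero => simp
    | add x y hx hy => simp only [map_add, LinearMap.add_apply] at hx hy ⊢; rw [hx, hy]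
    | tmul a₁ a₂ =>
      simp only [TensorProduct.map_tmul, TensorProduct.homTensorHomMap_apply,
        LinearMap.mul'_apply, LinearMap.comp_apply, LinearMap.id_apply,
        LinearMap.mulRight_apply, cMap_tmul, TensorProduct.map_tmul]
      simp [dualRep, cMap_tmul, Module.Dual.transpose_apply, map_mul, mul_assoc]

end Aux


lemma burnside {U V : Type*} [Ring U] [Algebra ℂ U] [AddCommGroup V] [Module ℂ V]
    [FiniteDimensional ℂ V] [Nontrivial V] (T : U →ₐ[ℂ] Module.End ℂ V)
    (hirr : ∀ W : Submodule ℂ V, (∀ a : U, ∀ w ∈ W, T a w ∈ W) → W = ⊥ ∨ W = ⊤) :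
    Function.Surjective T := by
  letI instU : Module U V := Module.compHom V T.toRingHom
  have hsmul : ∀ (a : U) (v : V), a • v = T a v := fun _ _ => rfl
  letI : IsScalarTower ℂ U V :=
    ⟨fun c a v => by
      rw [hsmul, hsmul, Algebra.smul_def, map_mul, AlgHom.commutes,
        Module.End.mul_apply, Module.algebraMap_end_apply]⟩
  have hCsmul : ∀ (c : ℂ) (v : V), c • v = ((algebraMap ℂ U c) • v : V) := by
    intro c v
    rw [Algebra.algebraMap_eq_smul_one, smul_assoc, hsmul, map_one, Module.End.one_apply]
  -- Schur: any U-linear endomorphism is a ℂ-scalar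
  have schur : ∀ (g : V →ₗ[U] V), ∃ c : ℂ, ∀ v, g v = c • v := by
    intro g
    have hgC : ∀ (c : ℂ) (v : V), g (c • v) = c • g v := by
      intro c v
      rw [hCsmul, map_smul, ← hCsmul]
    let gC : Module.End ℂ V :=
      { toFun := g, map_add' := map_add g, map_smul' := hgC }
    obtain ⟨μ, hμ⟩ := Module.End.exists_eigenvalue gC
    obtain ⟨v, hv⟩ := hμ.exists_hasEigenvector
    refine ⟨μ, ?_⟩
    have hker : LinearMap.ker (gC - μ • 1) = ⊤ := by
      have hinv : ∀ a : U, ∀ w ∈ LinearMap.ker (gC - μ • 1), T a w ∈ LinearMap.ker (gC - μ • 1) := by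
        intro a w hw
        simp only [LinearMap.mem_ker, LinearMap.sub_apply, LinearMap.smul_apply,
          Module.End.one_apply] at hw ⊢
        have h2 : gC (T a w) = T a (gC w) := by
          show g (a • w) = a • g w
          exact map_smul g a w
        rw [h2, show (T a) (gC w) - μ • (T a) w = T a (gC w - μ • w) by
          rw [map_sub, map_smul], show gC w - μ • w = 0 from hw, map_zero]
      rcases hirr (LinearMap.ker (gC - μ • 1)) hinv with h | h
      · exfalso
        have hvm : v ∈ LinearMap.ker (gC - μ • 1) := by
          simp [LinearMap.mem_ker, LinearMap.sub_apply, hv.apply_eq_smul, gC]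
        rw [h] at hvm
        exact hv.2 ((Submodule.mem_bot ℂ).mp hvm)
      · exact h
    intro u
    have : u ∈ LinearMap.ker (gC - μ • 1) := hker ▸ Submodule.mem_top
    exact (by simpa only [LinearMap.mem_ker, LinearMap.sub_apply, LinearMap.smul_apply,
      Module.End.one_apply, sub_eq_zero] using this : gC u = μ • u)
  -- simplicity of V as U-module
  obtain ⟨v₀, hv₀⟩ := exists_ne (0 : V)
  haveI : Nontrivial (Submodule U V) :=
    ⟨⊥, ⊤, fun h => hv₀ (by
      have : v₀ ∈ (⊥ : Submodule U V) := h ▸ Submodule.mem_top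
      simpa using this)⟩
  haveI : IsSimpleModule U V := by
    refine @IsSimpleModule.mk U _ V _ _ ⟨fun p => ?_⟩
    rcases hirr (p.restrictScalars ℂ) (fun a w hw => by
        show T a w ∈ p
        rw [← hsmul]; exact p.smul_mem a hw) with h | h
    · left; ext x
      simp only [Submodule.mem_bot]
      constructor
      · intro hx
        have : x ∈ p.restrictScalars ℂ := hx
        rw [h] at this; simpa using this
      · rintro rfl; exact p.zero_mem
    · right; ext x
      simp only [Submodule.mem_top, iff_true]
      have : x ∈ p.restrictScalars ℂ := h ▸ Submodule.mem_top
      exact this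
  -- semisimplicity of Fin n → V
  intro f
  set n := Module.finrank ℂ V with hn
  let bas : Module.Basis (Fin n) ℂ V := Module.finBasis ℂ V
  let cop : Fin n → Submodule U (Fin n → V) := fun i => LinearMap.range (LinearMap.single U (fun _ => V) i)
  haveI hss : ∀ i, IsSemisimpleModule U (cop i) := by
    intro i
    haveI : IsSimpleModule U (cop i) :=
      IsSimpleModule.congr (LinearEquiv.ofInjective (LinearMap.single U (fun _ => V) i)
        (by rw [LinearMap.coe_single]; exact Pi.single_injective i)).symm
    infer_instance
  haveI : IsSemisimpleModule U (Fin n → V) := by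
    refine isSemisimpleModule_of_isSemisimpleModule_submodule' hss ?_
    rw [eq_top_iff]
    intro x _
    rw [← Finset.univ_sum_single x]
    exact Submodule.sum_mem _ fun i _ =>
      Submodule.mem_iSup_of_mem i ⟨x i, rfl⟩
  -- the cyclic submodule generated by the basis tuple
  set b : Fin n → V := fun i => bas i with hb
  set W : Submodule U (Fin n → V) := Submodule.span U {b} with hW
  obtain ⟨Q, hQ⟩ := exists_isCompl W
  let pr : (Fin n → V) →ₗ[U] (Fin n → V) := W.subtype ∘ₗ Submodule.linearProjOfIsCompl W Q hQ
  have hprW : ∀ x ∈ W, pr x = x := by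
    intro x hx
    exact congrArg Subtype.val (Submodule.projectionOnto_apply_left hQ ⟨x, hx⟩)
  have hprmem : ∀ x : Fin n → V, pr x ∈ W := fun x => (Submodule.linearProjOfIsCompl W Q hQ x).2
  -- pr commutes with componentwise application of f
  have hcomm : ∀ x : Fin n → V, pr (fun i => f (x i)) = fun i => f (pr x i) := by
    -- component maps of pr are scalars
    have comp : ∀ i j : Fin n, ∃ c : ℂ, ∀ v : V,
        pr (Pi.single j v) i = c • v := by
      intro i j
      obtain ⟨c, hc⟩ := schur ((LinearMap.proj i) ∘ₗ pr ∘ₗ (LinearMap.single U (fun _ => V) j))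
      exact ⟨c, fun v => hc v⟩
    choose c hc using comp
    have hpr : ∀ (x : Fin n → V) (i : Fin n), pr x i = ∑ j, c i j • x j := by
      intro x i
      conv_lhs => rw [← Finset.univ_sum_single x]
      rw [map_sum]
      simp only [Finset.sum_apply]
      exact Finset.sum_congr rfl fun j _ => hc i j (x j)
    intro x
    funext i
    rw [hpr, hpr, map_sum]
    exact Finset.sum_congr rfl fun j _ => (map_smul f (c i j) (x j)).symm
  -- conclude
  have hbW : b ∈ W := Submodule.mem_span_singleton_self b
  have hfb : (fun i => f (b i)) ∈ W := by
    have : pr (fun i => f (b i)) = fun i => f (pr b i) := hcomm b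
    rw [hprW b hbW] at this
    rw [← this]
    exact hprmem _
  rw [hW, Submodule.mem_span_singleton] at hfb
  obtain ⟨a, ha⟩ := hfb
  refine ⟨a, ?_⟩
  apply bas.ext
  intro i
  have h3 := congrFun ha i
  simp only [Pi.smul_apply, hsmul] at h3
  exact h3


noncomputable def evalMap (V : Type*) [AddCommGroup V] [Module ℂ V] :
    (Module.Dual ℂ V) ⊗[ℂ] V →ₗ[ℂ] (Module.End ℂ V →ₗ[ℂ] ℂ) :=
  TensorProduct.lift
    ((LinearMap.lcomp ℂ (Module.End ℂ V →ₗ[ℂ] ℂ)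
        ((LinearMap.id : Module.End ℂ V →ₗ[ℂ] (V →ₗ[ℂ] V)).flip)) ∘ₗ
      (LinearMap.llcomp ℂ (Module.End ℂ V) V ℂ))

lemma evalMap_tmul {V : Type*} [AddCommGroup V] [Module ℂ V]
    (ξ : Module.Dual ℂ V) (v : V) (g : Module.End ℂ V) :
    evalMap V (ξ ⊗ₜ[ℂ] v) g = ξ (g v) := rfl

lemma evalMap_injective (V : Type*) [AddCommGroup V] [Module ℂ V]
    [FiniteDimensional ℂ V] : Function.Injective (evalMap V) := by
  classical
  set n := Module.finrank ℂ V
  let bas : Module.Basis (Fin n) ℂ V := Module.finBasis ℂ V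
  let db : Module.Basis (Fin n) ℂ (Module.Dual ℂ V) := bas.dualBasis
  let B : Module.Basis (Fin n × Fin n) ℂ ((Module.Dual ℂ V) ⊗[ℂ] V) := Module.Basis.tensorProduct db bas
  -- elementary operators
  let E : Fin n → Fin n → Module.End ℂ V := fun k l => (bas.coord l).smulRight (bas k)
  -- left inverse
  let r : (Module.End ℂ V →ₗ[ℂ] ℂ) →ₗ[ℂ] (Module.Dual ℂ V) ⊗[ℂ] V :=
    ∑ p : Fin n × Fin n, (LinearMap.applyₗ (E p.1 p.2)).smulRight (db p.1 ⊗ₜ[ℂ] bas p.2)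
  have hleft : ∀ w, r (evalMap V w) = w := by
    suffices h : r ∘ₗ evalMap V = LinearMap.id by
      intro w; exact congrArg (fun f => f w) h |>.trans rfl
    apply B.ext
    rintro ⟨i, j⟩
    simp only [LinearMap.comp_apply, LinearMap.id_apply, Module.Basis.tensorProduct_apply, B]
    have hev : ∀ k l, evalMap V (db i ⊗ₜ[ℂ] bas j) (E k l) =
        if (k, l) = (i, j) then 1 else 0 := by
      intro k l
      rw [evalMap_tmul]
      simp only [E, LinearMap.smulRight_apply, map_smul, smul_eq_mul, db,
        Module.Basis.coe_dualBasis, Module.Basis.coord_apply, Module.Basis.repr_self_apply, Prod.mk.injEq]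
      by_cases hk : k = i <;> by_cases hl : l = j <;>
        simp_all [eq_comm]
    have happ : ∀ (g : Module.End ℂ V) (φ : Module.End ℂ V →ₗ[ℂ] ℂ),
        LinearMap.applyₗ (R := ℂ) g φ = φ g := fun _ _ => rfl
    simp only [r, LinearMap.sum_apply, LinearMap.smulRight_apply, happ]
    rw [Finset.sum_eq_single (i, j)]
    · rw [hev i j]; simp
    · rintro ⟨k, l⟩ _ hkl
      rw [hev k l, if_neg hkl, zero_smul]
    · intro h; exact absurd (Finset.mem_univ _) h
  intro w w' h
  have h2 := hleft w
  rw [h, hleft w'] at h2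
  exact h2.symm

lemma cMap_eq_evalMap {U V : Type*} [Ring U] [HopfAlgebra ℂ U] [AddCommGroup V] [Module ℂ V]
    (T : U →ₐ[ℂ] Module.End ℂ V) (w : (Module.Dual ℂ V) ⊗[ℂ] V) (b : U) :
    cMap T w b = evalMap V w (T b) := by
  induction w using TensorProduct.induction_on with
  | zero => simp
  | add x y hx hy => simp [map_add, LinearMap.add_apply, hx, hy]
  | tmul ξ v => rfl

/-- For a finite-dimensional irreducible representation `T : U → End(V)` of a
Hopf algebra `U` over ℂ, the map `c : V* ⊗ V → U*`, `c(ξ ⊗ v)(a) = ξ(T(a)v)`: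
(i) intertwines `T* ⊗ T` with the action `ad°` of `U` on `U*`;
(ii) is injective with image the space of matrix elements `M(T)`;
in particular `dim M(T) = (dim V)²`. -/
theorem stmt_5 (U V : Type*) [Ring U] [HopfAlgebra ℂ U]
    [AddCommGroup V] [Module ℂ V] [FiniteDimensional ℂ V] [Nontrivial V]
    (T : U →ₐ[ℂ] Module.End ℂ V)
    (hirr : ∀ W : Submodule ℂ V, (∀ a : U, ∀ w ∈ W, T a w ∈ W) → W = ⊥ ∨ W = ⊤) :
    (∀ (a : U) (w : (Module.Dual ℂ V) ⊗[ℂ] V) (b : U),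
      cMap T ((tensorRep (dualRep T) (T.toLinearMap : U →ₗ[ℂ] (V →ₗ[ℂ] V)) a) w) b =
        cMap T w (adAct a b)) ∧
    Function.Injective (cMap T) ∧
    LinearMap.range (cMap T) = matrixElems T ∧
    Module.finrank ℂ (matrixElems T) = (Module.finrank ℂ V) ^ 2 := by
  have hsurj : Function.Surjective T := burnside T hirr
  have hinj : Function.Injective (cMap T) := by
    intro w w' h
    apply evalMap_injective V
    apply LinearMap.ext
    intro g
    obtain ⟨b, rfl⟩ := hsurj g
    rw [← cMap_eq_evalMap T w b, ← cMap_eq_evalMap T w' b, h]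
  have hrange : LinearMap.range (cMap T) = matrixElems T := by
    rw [← Submodule.map_top, ← TensorProduct.span_tmul_eq_top ℂ (Module.Dual ℂ V) V,
      Submodule.map_span, matrixElems]
    apply congrArg
    ext x
    constructor
    · rintro ⟨t, ⟨ξ, v, rfl⟩, rfl⟩
      exact ⟨ξ, v, rfl⟩
    · rintro ⟨ξ, v, rfl⟩
      exact ⟨ξ ⊗ₜ[ℂ] v, ⟨ξ, v, rfl⟩, rfl⟩
  have hfr : Module.finrank ℂ (matrixElems T) = (Module.finrank ℂ V) ^ 2 := by
    rw [← hrange, LinearMap.finrank_range_of_inj hinj, Module.finrank_tensorProduct,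
      Subspace.dual_finrank_eq, sq]
  exact ⟨part_i T, hinj, hrange, hfr⟩
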